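/- Let Phi, Psi : (0, R] -> [0, infinity) with Phi increasing, Psi decreasing, Psi(h/2) <= 4*Psi(h) for all h in (0, R], and suppose there is theta in (0,1) such that Phi(s) <= theta * Phi(t) + theta * Psi(t - s) whenever R/2 <= s < t <= R. Then Phi(R/2) <= C(theta) * Psi(R) for some constant C depending only on theta. -/

import Mathlib

open Finset Filter

theorem stmt_8 (θ : ℝ) (hθ : θ ∈ Set.Ioo (0 : ℝ) 1) :
    ∃ C : ℝ, 0 < C ∧
      ∀ (R : ℝ), 0 < R →
        ∀ Φ Ψ : ℝ → ℝ,
          (∀ h ∈ Set.Ioc (0 : ℝ) R, 0 ≤ Φ h) →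
          (∀ h ∈ Set.Ioc (0 : ℝ) R, 0 ≤ Ψ h) →
          (∀ s ∈ Set.Ioc (0 : ℝ) R, ∀ t ∈ Set.Ioc (0 : ℝ) R, s ≤ t → Φ s ≤ Φ t) →
          (∀ s ∈ Set.Ioc (0 : ℝ) R, ∀ t ∈ Set.Ioc (0 : ℝ) R, s ≤ t → Ψ t ≤ Ψ s) →
          (∀ h ∈ Set.Ioc (0 : ℝ) R, Ψ (h / 2) ≤ 4 * Ψ h) →
          (∀ s t : ℝ, R / 2 ≤ s → s < t → t ≤ R → Φ s ≤ θ * Φ t + θ * Ψ (t - s)) →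
          Φ (R / 2) ≤ C * Ψ R := by
  obtain ⟨hθ0, hθ1⟩ := hθ
  -- choose k with θ^(2^k) < 1/4
  obtain ⟨k, hk⟩ := exists_pow_lt_of_lt_one (by norm_num : (0:ℝ) < 1/4) hθ1
  set m : ℕ := 2 ^ k with hmdef
  have hm1 : 1 ≤ m := Nat.one_le_two_pow
  have hmpos : 0 < m := hm1
  have hθm : θ ^ m < 1/4 :=
    lt_of_le_of_lt (pow_le_pow_of_le_one hθ0.le hθ1.le (Nat.lt_two_pow_self (n := k)).le) hk
  set ρ : ℝ := 4 * θ ^ m with hρdef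
  have hρ0 : 0 < ρ := by positivity
  have hρ1 : ρ < 1 := by rw [hρdef]; nlinarith
  have h1ρ : 0 < 1 - ρ := by linarith
  have hmR : (0:ℝ) < (m : ℝ) := by exact_mod_cast hmpos
  refine ⟨θ * 4 ^ (k + 2) * ((m : ℝ) * (1 - ρ)⁻¹), by positivity, ?_⟩
  intro R hR Φ Ψ hΦ0 hΨ0 hΦmono hΨanti hdbl hiter
  -- the sequence of gaps and points
  set e : ℕ → ℕ := fun i => i / m + (k + 2) with hedef
  set d : ℕ → ℝ := fun i => R / 2 ^ e i with hddef
  have hd0 : ∀ i, 0 < d i := fun i => by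
    simp only [hddef]; positivity
  set S : ℕ → ℝ := fun j => ∑ i ∈ range j, d i with hSdef
  set u : ℕ → ℝ := fun j => R / 2 + S j with hudef
  -- invariant: S j + (2m - j%m) * d j = R/2
  have hInv : ∀ j, S j + ((2 * m - j % m : ℕ) : ℝ) * d j = R / 2 := by
    intro j
    induction j with
    | zero =>
      simp only [hSdef, hddef, hedef, hmdef]
      simp only [Finset.sum_range_zero, Nat.zero_mod, Nat.zero_div, Nat.sub_zero, zero_add]
      have h2k : (0:ℝ) < (2:ℝ) ^ k := by positivity
      push_cast
      rw [pow_add]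
      field_simp
    | succ j ih =>
      have hrm : j % m < m := Nat.mod_lt _ hmpos
      have hj1 : j + 1 = m * (j / m) + (j % m + 1) := by
        have hq := Nat.div_add_mod j m; omega
      have hSsucc : S (j + 1) = S j + d j := by
        simp only [hSdef, Finset.sum_range_succ]
      by_cases hr : j % m + 1 = m
      · -- block rollover
        have hj1' : j + 1 = m * (j / m + 1) := by
          rw [hj1, hr]; exact (Nat.mul_succ _ _).symm
        have hmod : (j + 1) % m = 0 := by rw [hj1']; exact Nat.mul_mod_right _ _
        have hdiv : (j + 1) / m = j / m + 1 := by
          rw [hj1']; exact Nat.mul_div_cancel_left _ hmpos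
        have hdsucc : d (j + 1) = d j / 2 := by
          simp only [hddef, hedef, hdiv]
          rw [show j / m + 1 + (k + 2) = (j / m + (k + 2)) + 1 from by ring, pow_succ]
          rw [div_div]
        have hcast : ((2 * m - j % m : ℕ) : ℝ) = (m : ℝ) + 1 := by
          have : 2 * m - j % m = m + 1 := by omega
          rw [this]; push_cast; ring
        rw [hSsucc, hmod, hdsucc]
        rw [hcast] at ih
        rw [Nat.sub_zero]
        push_cast
        linear_combination ih
      · -- within block
        have hlt : j % m + 1 < m := lt_of_le_of_ne (by omega) hr
        have hmod : (j + 1) % m = j % m + 1 := by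
          rw [hj1, Nat.mul_add_mod, Nat.mod_eq_of_lt hlt]
        have hdiv : (j + 1) / m = j / m := by
          rw [hj1, Nat.mul_add_div hmpos, Nat.div_eq_of_lt hlt, add_zero]
        have hdsucc : d (j + 1) = d j := by simp only [hddef, hedef, hdiv]
        rw [hSsucc, hmod, hdsucc]
        have hc1 : ((2 * m - (j % m + 1) : ℕ) : ℝ) = 2 * (m:ℝ) - (j % m : ℕ) - 1 := by
          have h : j % m + 1 ≤ 2 * m := by omega
          push_cast [Nat.cast_sub h]; ring
        have hc2 : ((2 * m - j % m : ℕ) : ℝ) = 2 * (m:ℝ) - (j % m : ℕ) := by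
          have h : j % m ≤ 2 * m := by omega
          push_cast [Nat.cast_sub h]; ring
        rw [hc1]
        rw [hc2] at ih
        linear_combination ih
  have hS0 : ∀ j, 0 ≤ S j := fun j =>
    Finset.sum_nonneg fun i _ => (hd0 i).le
  have hu_ge : ∀ j, R / 2 ≤ u j := fun j => by
    simp only [hudef]; linarith [hS0 j]
  have hu_lt : ∀ j, u j + (m : ℝ) * d j ≤ R := by
    intro j
    have h := hInv j
    have hge : (m : ℝ) ≤ ((2 * m - j % m : ℕ) : ℝ) := by
      have hrm : j % m < m := Nat.mod_lt _ hmpos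
      have : m ≤ 2 * m - j % m := by omega
      exact_mod_cast this
    have : (m : ℝ) * d j ≤ ((2 * m - j % m : ℕ) : ℝ) * d j :=
      mul_le_mul_of_nonneg_right hge (hd0 j).le
    simp only [hudef]; linarith
  have hu_le : ∀ j, u j ≤ R := fun j => by
    have := hu_lt j
    nlinarith [hd0 j, hmR]
  have hu_mem : ∀ j, u j ∈ Set.Ioc (0:ℝ) R := fun j =>
    ⟨lt_of_lt_of_le (by linarith : (0:ℝ) < R / 2) (hu_ge j), hu_le j⟩
  have hu_succ : ∀ j, u (j + 1) = u j + d j := fun j => by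
    simp only [hudef, hSdef, Finset.sum_range_succ]; ring
  have hRmem : R ∈ Set.Ioc (0:ℝ) R := ⟨hR, le_refl R⟩
  have hΨR0 : 0 ≤ Ψ R := hΨ0 R hRmem
  -- iterated doubling
  have hΨpow : ∀ q : ℕ, Ψ (R / 2 ^ q) ≤ 4 ^ q * Ψ R := by
    intro q
    induction q with
    | zero => simp
    | succ q ih =>
      have hmem : R / 2 ^ q ∈ Set.Ioc (0:ℝ) R := by
        constructor
        · positivity
        · rw [div_le_iff₀ (by positivity)]
          nlinarith [one_le_pow₀ (by norm_num : (1:ℝ) ≤ 2) (n := q)]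
      have h1 : Ψ (R / 2 ^ (q + 1)) = Ψ (R / 2 ^ q / 2) := by
        rw [pow_succ, div_div]
      calc Ψ (R / 2 ^ (q + 1)) = Ψ (R / 2 ^ q / 2) := h1
        _ ≤ 4 * Ψ (R / 2 ^ q) := hdbl _ hmem
        _ ≤ 4 * (4 ^ q * Ψ R) := by linarith
        _ = 4 ^ (q + 1) * Ψ R := by ring
  have hΨd : ∀ i, Ψ (d i) ≤ 4 ^ e i * Ψ R := fun i => hΨpow (e i)
  -- main iteration
  have hmain : ∀ n, Φ (R / 2) ≤ θ ^ n * Φ (u n) + ∑ i ∈ range n, θ ^ (i + 1) * Ψ (d i) := by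
    intro n
    induction n with
    | zero =>
      simp only [pow_zero, one_mul, Finset.range_zero, Finset.sum_empty, add_zero]
      have : u 0 = R / 2 := by simp [hudef, hSdef]
      rw [this]
    | succ n ih =>
      have hstep : Φ (u n) ≤ θ * Φ (u (n + 1)) + θ * Ψ (d n) := by
        have h := hiter (u n) (u (n + 1)) (hu_ge n)
          (by rw [hu_succ n]; linarith [hd0 n]) (hu_le (n + 1))
        have : u (n + 1) - u n = d n := by rw [hu_succ n]; ring
        rwa [this] at h
      have hθn : (0:ℝ) ≤ θ ^ n := pow_nonneg hθ0.le n
      have h2 : θ ^ n * Φ (u n) ≤ θ ^ n * (θ * Φ (u (n + 1)) + θ * Ψ (d n)) :=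
        mul_le_mul_of_nonneg_left hstep hθn
      rw [Finset.sum_range_succ]
      have hps : θ ^ (n + 1) = θ ^ n * θ := pow_succ θ n
      calc Φ (R / 2) ≤ θ ^ n * Φ (u n) + ∑ i ∈ range n, θ ^ (i + 1) * Ψ (d i) := ih
        _ ≤ θ ^ n * (θ * Φ (u (n + 1)) + θ * Ψ (d n))
            + ∑ i ∈ range n, θ ^ (i + 1) * Ψ (d i) := by linarith
        _ = θ ^ (n + 1) * Φ (u (n + 1))
            + (∑ i ∈ range n, θ ^ (i + 1) * Ψ (d i) + θ ^ (n + 1) * Ψ (d n)) := by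
            rw [hps]; ring
  -- bound the sum
  have hblock : ∀ N : ℕ, ∑ i ∈ range (m * N), ρ ^ (i / m) = (m : ℝ) * ∑ q ∈ range N, ρ ^ q := by
    intro N
    induction N with
    | zero => simp
    | succ N ih =>
      rw [Nat.mul_succ, Finset.sum_range_add, ih, Finset.sum_range_succ]
      have : ∀ i ∈ range m, ρ ^ ((m * N + i) / m) = ρ ^ N := by
        intro i hi
        rw [Finset.mem_range] at hi
        rw [Nat.mul_add_div hmpos, Nat.div_eq_of_lt hi, add_zero]
      rw [Finset.sum_congr rfl this, Finset.sum_const, Finset.card_range, nsmul_eq_mul]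
      ring
  have hgeom : ∀ N : ℕ, ∑ q ∈ range N, ρ ^ q ≤ (1 - ρ)⁻¹ := by
    intro N
    rw [geom_sum_eq (ne_of_lt hρ1)]
    rw [div_le_iff_of_neg (by linarith : ρ - 1 < 0)]
    have : 0 ≤ ρ ^ N := pow_nonneg hρ0.le N
    have h : (1 - ρ)⁻¹ * (1 - ρ) = 1 := inv_mul_cancel₀ (ne_of_gt h1ρ)
    nlinarith [h]
  have hsum_rho : ∀ n, ∑ i ∈ range n, ρ ^ (i / m) ≤ (m : ℝ) * (1 - ρ)⁻¹ := by
    intro n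
    have hsub : range n ⊆ range (m * n) :=
      Finset.range_subset_range.mpr (Nat.le_mul_of_pos_left n hmpos)
    calc ∑ i ∈ range n, ρ ^ (i / m)
        ≤ ∑ i ∈ range (m * n), ρ ^ (i / m) :=
          Finset.sum_le_sum_of_subset_of_nonneg hsub
            (fun i _ _ => pow_nonneg hρ0.le _)
      _ = (m : ℝ) * ∑ q ∈ range n, ρ ^ q := hblock n
      _ ≤ (m : ℝ) * (1 - ρ)⁻¹ := by
          exact mul_le_mul_of_nonneg_left (hgeom n) hmR.le
  have hterm : ∀ i : ℕ, θ ^ (i + 1) * (4:ℝ) ^ e i ≤ θ * 4 ^ (k + 2) * ρ ^ (i / m) := by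
    intro i
    have h1 : θ ^ i ≤ (θ ^ m) ^ (i / m) := by
      rw [← pow_mul]
      have hle : m * (i / m) ≤ i := by
        rw [Nat.mul_comm]; exact Nat.div_mul_le_self i m
      exact pow_le_pow_of_le_one hθ0.le hθ1.le hle
    have h2 : (4:ℝ) ^ e i = 4 ^ (i / m) * 4 ^ (k + 2) := by
      simp only [hedef]; rw [pow_add]
    have h3 : ρ ^ (i / m) = 4 ^ (i / m) * (θ ^ m) ^ (i / m) := by
      rw [hρdef, mul_pow]
    have h4pos : (0:ℝ) < 4 ^ (i / m) := by positivity
    calc θ ^ (i + 1) * (4:ℝ) ^ e i = θ * 4 ^ (k + 2) * (4 ^ (i / m) * θ ^ i) := by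
          rw [h2, pow_succ]; ring
      _ ≤ θ * 4 ^ (k + 2) * (4 ^ (i / m) * (θ ^ m) ^ (i / m)) := by
          have : 4 ^ (i / m) * θ ^ i ≤ 4 ^ (i / m) * (θ ^ m) ^ (i / m) :=
            mul_le_mul_of_nonneg_left h1 h4pos.le
          have hc : (0:ℝ) ≤ θ * 4 ^ (k + 2) := by positivity
          exact mul_le_mul_of_nonneg_left this hc
      _ = θ * 4 ^ (k + 2) * ρ ^ (i / m) := by rw [h3]
  have hsumbound : ∀ n, ∑ i ∈ range n, θ ^ (i + 1) * Ψ (d i)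
      ≤ θ * 4 ^ (k + 2) * ((m : ℝ) * (1 - ρ)⁻¹) * Ψ R := by
    intro n
    calc ∑ i ∈ range n, θ ^ (i + 1) * Ψ (d i)
        ≤ ∑ i ∈ range n, θ ^ (i + 1) * (4 ^ e i * Ψ R) := by
          apply Finset.sum_le_sum
          intro i _
          exact mul_le_mul_of_nonneg_left (hΨd i) (pow_nonneg hθ0.le _)
      _ = ∑ i ∈ range n, (θ ^ (i + 1) * 4 ^ e i) * Ψ R := by
          apply Finset.sum_congr rfl; intro i _; ring
      _ ≤ ∑ i ∈ range n, (θ * 4 ^ (k + 2) * ρ ^ (i / m)) * Ψ R := by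
          apply Finset.sum_le_sum
          intro i _
          exact mul_le_mul_of_nonneg_right (hterm i) hΨR0
      _ = θ * 4 ^ (k + 2) * Ψ R * ∑ i ∈ range n, ρ ^ (i / m) := by
          rw [Finset.mul_sum]
          apply Finset.sum_congr rfl; intro i _; ring
      _ ≤ θ * 4 ^ (k + 2) * Ψ R * ((m : ℝ) * (1 - ρ)⁻¹) := by
          apply mul_le_mul_of_nonneg_left (hsum_rho n)
          positivity
      _ = θ * 4 ^ (k + 2) * ((m : ℝ) * (1 - ρ)⁻¹) * Ψ R := by ring
  -- combine and take the limit
  have hfinal : ∀ n, Φ (R / 2) ≤ θ ^ n * Φ R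
      + θ * 4 ^ (k + 2) * ((m : ℝ) * (1 - ρ)⁻¹) * Ψ R := by
    intro n
    have hΦun : Φ (u n) ≤ Φ R := hΦmono (u n) (hu_mem n) R hRmem (hu_le n)
    have h1 : θ ^ n * Φ (u n) ≤ θ ^ n * Φ R :=
      mul_le_mul_of_nonneg_left hΦun (pow_nonneg hθ0.le n)
    linarith [hmain n, hsumbound n]
  have htend : Tendsto (fun n : ℕ => θ ^ n * Φ R
      + θ * 4 ^ (k + 2) * ((m : ℝ) * (1 - ρ)⁻¹) * Ψ R) atTop
      (nhds (0 * Φ R + θ * 4 ^ (k + 2) * ((m : ℝ) * (1 - ρ)⁻¹) * Ψ R)) := by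
    exact ((tendsto_pow_atTop_nhds_zero_of_lt_one hθ0.le hθ1).mul_const _).add_const _
  have := ge_of_tendsto' htend hfinal
  linarith [this]
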